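/- arXiv:2405.03468 — 2 statements merged into one kernel-verified Lean document; each statement's English description precedes it below -/
import Mathlib

section
/- Translation-averaging reduces KL divergence (Proposition 3.2): let p be a probability density on ℝ^{G} invariant under all translations T_τ, τ ∈ G, of a finite abelian group G. If q = Z^{-1} e^{-U} and q̃ = Z̃^{-1} e^{-Ave U} where (Ave U)(φ) = |G|^{-1} ∑_{τ∈G} U(T_τ φ), then KL(p‖q̃) ≤ KL(p‖q). -/
open MeasureTheory

noncomputable section

abbrev E' (ι : Type) [Fintype ι] : Type := EuclideanSpace ℝ ι

def toE {ι : Type} [Fintype ι] (x : ι → ℝ) : E' ι := WithLp.toLp 2 x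

noncomputable def KL' {ι : Type} [Fintype ι] (q p : E' ι → ℝ) : ℝ :=
  ∫ x, q x * Real.log (q x / p x)

def IsDensity' {ι : Type} [Fintype ι] (p : E' ι → ℝ) : Prop :=
  (∀ x, 0 ≤ p x) ∧ Measurable p ∧ (∫ x, p x) = 1

/-- Translation of a field over a finite abelian group. -/
def translateField {G : Type} [Fintype G] [AddCommGroup G] (τ : G) (φ : E' G) : E' G :=
  toE fun n => φ (n - τ)

lemma translate_eq {G : Type} [Fintype G] [AddCommGroup G] (τ : G) :
    (translateField τ : E' G → E' G)
      = ⇑(LinearIsometryEquiv.piLpCongrLeft 2 ℝ ℝ (Equiv.addRight τ)) := by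
  funext φ
  ext n
  simp [translateField, toE, LinearIsometryEquiv.piLpCongrLeft_apply, Equiv.piCongrLeft'_apply]
  exact congrArg φ (sub_eq_add_neg n τ)

lemma translate_mp {G : Type} [Fintype G] [AddCommGroup G] (τ : G) :
    MeasurePreserving (translateField τ) (volume : Measure (E' G)) volume := by
  rw [translate_eq]
  exact (LinearIsometryEquiv.piLpCongrLeft 2 ℝ ℝ (Equiv.addRight τ)).measurePreserving

lemma translate_emb {G : Type} [Fintype G] [AddCommGroup G] (τ : G) :
    MeasurableEmbedding (translateField τ : E' G → E' G) := by
  rw [translate_eq]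
  exact (LinearIsometryEquiv.piLpCongrLeft 2 ℝ ℝ
    (Equiv.addRight τ)).toHomeomorph.measurableEmbedding

lemma translate_integral {G : Type} [Fintype G] [AddCommGroup G] (τ : G) (f : E' G → ℝ) :
    ∫ φ, f (translateField τ φ) = ∫ φ, f φ :=
  (translate_mp τ).integral_comp (translate_emb τ) f

lemma translate_integrable {G : Type} [Fintype G] [AddCommGroup G] (τ : G) {f : E' G → ℝ}
    (hf : Integrable f) : Integrable (fun φ => f (translateField τ φ)) :=
  ((translate_mp τ).integrable_comp_emb (translate_emb τ)).mpr hf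

lemma translate_comp {G : Type} [Fintype G] [AddCommGroup G] (τ σ : G) (φ : E' G) :
    translateField τ (translateField σ φ) = translateField (τ + σ) φ := by
  ext n
  show φ (n - τ - σ) = φ (n - (τ + σ))
  rw [sub_sub]

/-- translation averaging reduces the KL divergence: for a stationary
density `p`, if `q = Z⁻¹ e^{-U}` and `q̃ = Z̃⁻¹ e^{-Ave U}` with
`(Ave U)(φ) = |G|⁻¹ ∑_τ U(T_τ φ)`, then `KL(p‖q̃) ≤ KL(p‖q)`. -/
theorem translation_averaging_decreases_KL {G : Type} [Fintype G] [AddCommGroup G]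
    (p : E' G → ℝ) (hpd : IsDensity' p)
    (hstat : ∀ (τ : G) (φ : E' G), p (translateField τ φ) = p φ)
    (U : E' G → ℝ) (hU : Measurable U)
    (AveU : E' G → ℝ)
    (hAveU : ∀ φ, AveU φ = (Fintype.card G : ℝ)⁻¹ * ∑ τ : G, U (translateField τ φ))
    (Z Zt : ℝ)
    (hZ : Z = ∫ φ, Real.exp (-U φ)) (hZpos : 0 < Z)
    (hZt : Zt = ∫ φ, Real.exp (-AveU φ)) (hZtpos : 0 < Zt)
    (q qt : E' G → ℝ)
    (hq : ∀ φ, q φ = Z⁻¹ * Real.exp (-U φ))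
    (hqt : ∀ φ, qt φ = Zt⁻¹ * Real.exp (-AveU φ))
    -- sufficient integrability for the KL divergences:
    (hint1 : Integrable (fun φ => p φ * Real.log (p φ / q φ)))
    (hint2 : Integrable (fun φ => p φ * Real.log (p φ / qt φ)))
    (hintZ : Integrable (fun φ => Real.exp (-U φ)))
    (hintZt : Integrable (fun φ => Real.exp (-AveU φ))) :
    KL' p qt ≤ KL' p q := by
  obtain ⟨hp0, hpm, hp1⟩ := hpd
  have hGpos : (0 : ℝ) < Fintype.card G := by
    exact_mod_cast Fintype.card_pos
  have hGne : (Fintype.card G : ℝ) ≠ 0 := ne_of_gt hGpos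
  -- p is integrable
  have hpint : Integrable p := by
    by_contra h
    rw [integral_undef h] at hp1
    norm_num at hp1
  -- Step 1 : Zt ≤ Z
  have hTZ : ∀ τ : G, ∫ φ, Real.exp (-U (translateField τ φ)) = Z := fun τ => by
    rw [hZ]; simpa using translate_integral τ (fun φ => Real.exp (-U φ))
  have hTint : ∀ τ : G, Integrable (fun φ => Real.exp (-U (translateField τ φ))) :=
    fun τ => translate_integrable τ hintZ
  have hconv : ∀ φ, Real.exp (-AveU φ)
      ≤ (Fintype.card G : ℝ)⁻¹ * ∑ τ : G, Real.exp (-U (translateField τ φ)) := by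
    intro φ
    have h1 : -AveU φ = ∑ τ : G, (Fintype.card G : ℝ)⁻¹ • (-U (translateField τ φ)) := by
      rw [hAveU]
      simp only [smul_eq_mul, mul_neg]
      rw [Finset.mul_sum, Finset.sum_neg_distrib]
    rw [h1]
    have := convexOn_exp.map_sum_le (t := Finset.univ)
      (w := fun _ : G => (Fintype.card G : ℝ)⁻¹)
      (p := fun τ : G => -U (translateField τ φ))
      (fun _ _ => by positivity)
      (by simp [Finset.card_univ, hGne])
      (fun _ _ => Set.mem_univ _)
    refine this.trans_eq ?_
    simp [smul_eq_mul, Finset.mul_sum]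
  have hZtZ : Zt ≤ Z := by
    have hRHSint : Integrable
        (fun φ => (Fintype.card G : ℝ)⁻¹ * ∑ τ : G, Real.exp (-U (translateField τ φ))) :=
      (integrable_finset_sum _ fun τ _ => hTint τ).const_mul _
    calc Zt = ∫ φ, Real.exp (-AveU φ) := hZt
      _ ≤ ∫ φ, (Fintype.card G : ℝ)⁻¹ * ∑ τ : G, Real.exp (-U (translateField τ φ)) :=
          integral_mono hintZt hRHSint hconv
      _ = (Fintype.card G : ℝ)⁻¹ * ∑ τ : G, ∫ φ, Real.exp (-U (translateField τ φ)) := by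
          rw [integral_const_mul, integral_finset_sum _ fun τ _ => hTint τ]
      _ = Z := by simp [hTZ, hGne, Finset.sum_const, mul_comm, inv_mul_cancel₀]
  -- Step 2: invariance of AveU
  have hAveInv : ∀ (σ : G) (φ : E' G), AveU (translateField σ φ) = AveU φ := by
    intro σ φ
    rw [hAveU, hAveU]
    congr 1
    rw [show (∑ τ : G, U (translateField τ (translateField σ φ)))
        = ∑ τ : G, U (translateField (τ + σ) φ) by
      exact Finset.sum_congr rfl fun τ _ => by rw [translate_comp]]
    exact Fintype.sum_equiv (Equiv.addRight σ) _ _ (fun τ => rfl)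
  -- Step 3: the key pointwise identity
  set f : E' G → ℝ := fun φ => p φ * (U φ - AveU φ) with hf
  have hqpos : ∀ φ, 0 < q φ := fun φ => by
    rw [hq]; positivity
  have hqtpos : ∀ φ, 0 < qt φ := fun φ => by
    rw [hqt]; positivity
  have hfeq : ∀ φ, p φ * Real.log (p φ / q φ) - p φ * Real.log (p φ / qt φ)
      = f φ + p φ * Real.log (Z / Zt) := by
    intro φ
    rcases eq_or_lt_of_le (hp0 φ) with h | h
    · simp [hf, ← h]
    · rw [Real.log_div (ne_of_gt h) (ne_of_gt (hqpos φ)),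
        Real.log_div (ne_of_gt h) (ne_of_gt (hqtpos φ)),
        Real.log_div (ne_of_gt hZpos) (ne_of_gt hZtpos), hq, hqt,
        Real.log_mul (by positivity) (Real.exp_ne_zero _),
        Real.log_mul (by positivity) (Real.exp_ne_zero _),
        Real.log_exp, Real.log_exp, Real.log_inv, Real.log_inv, hf]
      ring
  have hfint : Integrable f := by
    have h1 : Integrable (fun φ => (p φ * Real.log (p φ / q φ)
        - p φ * Real.log (p φ / qt φ)) - p φ * Real.log (Z / Zt)) :=
      (hint1.sub hint2).sub (hpint.mul_const _)
    refine h1.congr (Filter.Eventually.of_forall fun φ => ?_)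
    show p φ * Real.log (p φ / q φ) - p φ * Real.log (p φ / qt φ) - p φ * Real.log (Z / Zt) = f φ
    linarith [hfeq φ]
  -- Step 4: ∫ f = 0
  have hsum0 : ∀ φ, ∑ σ : G, f (translateField σ φ) = 0 := by
    intro φ
    have : ∀ σ : G, f (translateField σ φ)
        = p φ * U (translateField σ φ) - p φ * AveU φ := by
      intro σ
      rw [hf]
      simp only [hstat σ φ, hAveInv σ φ]
      ring
    rw [Finset.sum_congr rfl fun σ _ => this σ, Finset.sum_sub_distrib,
      ← Finset.mul_sum]
    have hs : ∑ σ : G, U (translateField σ φ) = (Fintype.card G : ℝ) * AveU φ := by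
      rw [hAveU]
      field_simp
    rw [hs]
    simp [Finset.sum_const, Finset.card_univ]
    ring
  have hintf0 : ∫ φ, f φ = 0 := by
    have h1 : (Fintype.card G : ℝ) * ∫ φ, f φ
        = ∑ σ : G, ∫ φ, f (translateField σ φ) := by
      rw [Finset.sum_congr rfl fun σ _ => translate_integral σ f]
      simp [Finset.sum_const, Finset.card_univ, mul_comm]
    have h2 : ∑ σ : G, ∫ φ, f (translateField σ φ)
        = ∫ φ, ∑ σ : G, f (translateField σ φ) := by
      rw [integral_finset_sum _ fun σ _ => translate_integrable σ hfint]
    have h3 : ∫ φ, ∑ σ : G, f (translateField σ φ) = 0 := by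
      simp [hsum0]
    have := h1.trans (h2.trans h3)
    exact (mul_eq_zero.mp this).resolve_left hGne
  -- Step 5: conclude
  have hdiff : KL' p q - KL' p qt = Real.log (Z / Zt) := by
    unfold KL'
    rw [← integral_sub hint1 hint2]
    calc ∫ φ, (p φ * Real.log (p φ / q φ) - p φ * Real.log (p φ / qt φ))
        = ∫ φ, (f φ + p φ * Real.log (Z / Zt)) :=
          integral_congr_ae (Filter.Eventually.of_forall hfeq)
      _ = (∫ φ, f φ) + (∫ φ, p φ) * Real.log (Z / Zt) := by
          rw [integral_add hfint (hpint.mul_const _), integral_mul_const]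
      _ = Real.log (Z / Zt) := by rw [hintf0, hp1]; ring
  have hlog : 0 ≤ Real.log (Z / Zt) :=
    Real.log_nonneg ((one_le_div hZtpos).mpr hZtZ)
  linarith


end
end

section
/- Conjugate mirror filters generate an orthogonal matrix: let g ∈ ℓ²(ℤ/Nℤ) (N even) satisfy |ĝ(ω)|² + |ĝ(ω+π)|² = 2 for all ω, and define ḡ(n) = (-1)^{1-n} g(1-n). Then the operator φ ↦ (Gφ, Ḡφ) with Gφ(n) = (φ*g)(2n) and Ḡφ(n) = (φ*ḡ)(2n) (circular convolution) is orthogonal from ℝ^N to ℝ^{N/2} × ℝ^{N/2}. -/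
noncomputable section

open Finset Complex

namespace CMFaux

variable {N : ℕ} [NeZero N]

lemma sum_zmod {M : Type*} [AddCommMonoid M] (f : ZMod N → M) :
    ∑ x : ZMod N, f x = ∑ j ∈ Finset.range N, f (j : ZMod N) := by
  refine Finset.sum_nbij' (fun x => x.val) (fun j => (j : ZMod N)) ?_ ?_ ?_ ?_ ?_
  · intro a _; exact Finset.mem_range.2 (ZMod.val_lt a)
  · intro a _; exact Finset.mem_univ _
  · intro a _; exact ZMod.natCast_rightInverse a
  · intro a ha; exact ZMod.val_cast_of_lt (Finset.mem_range.1 ha)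
  · intro a _; rw [ZMod.natCast_rightInverse a]

lemma range_pair {M : Type*} [AddCommMonoid M] (r : ℕ) (F : ℕ → M) :
    ∑ j ∈ Finset.range (2 * r), F j = ∑ i ∈ Finset.range r, (F (2 * i) + F (2 * i + 1)) := by
  induction r with
  | zero => simp
  | succ n ih =>
    have h2 : 2 * (n + 1) = (2 * n + 1) + 1 := by ring
    rw [h2, Finset.sum_range_succ, Finset.sum_range_succ, Finset.sum_range_succ, ← ih,
      add_assoc]


lemma double_lemma (hN : Even N) {M : Type*} [AddCommMonoid M] (f : ZMod N → M) :
    ∑ k : ZMod N, f (2 * k) = ∑ n : Fin (N / 2), f (((2 * n.val : ℕ) : ZMod N))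
      + ∑ n : Fin (N / 2), f (((2 * n.val : ℕ) : ZMod N)) := by
  obtain ⟨r, hr⟩ := hN
  have hhalf : N / 2 = r := by omega
  have key : ∀ j : ℕ, f (2 * ((j : ℕ) : ZMod N)) = f (((2 * j : ℕ) : ZMod N)) := by
    intro j; congr 1; push_cast; ring
  have hfin : ∑ n : Fin (N / 2), f (((2 * n.val : ℕ) : ZMod N))
      = ∑ i ∈ Finset.range r, f (((2 * i : ℕ) : ZMod N)) := by
    rw [← hhalf, Fin.sum_univ_eq_sum_range (fun i => f (((2 * i : ℕ) : ZMod N)))]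
  have hrange : Finset.range N = Finset.range (r + r) := by rw [hr]
  rw [sum_zmod (fun k => f (2 * k)), hrange, Finset.sum_range_add, hfin]
  congr 1
  · exact Finset.sum_congr rfl fun j _ => key j
  · refine Finset.sum_congr rfl fun j _ => ?_
    rw [key (r + j)]
    congr 1
    have : ((2 * (r + j) : ℕ) : ZMod N) = ((N : ℕ) : ZMod N) + ((2 * j : ℕ) : ZMod N) := by
      rw [hr]; push_cast; ring
    rw [this, ZMod.natCast_self, zero_add]

lemma cover_lemma (hN : Even N) {M : Type*} [AddCommMonoid M] (f : ZMod N → M) :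
    (∑ k : ZMod N, f (2 * k)) + (∑ k : ZMod N, f (2 * k + 1))
      = (∑ v : ZMod N, f v) + (∑ v : ZMod N, f v) := by
  have key : ∀ j : ℕ, f (2 * ((j : ℕ) : ZMod N)) = f (((2 * j : ℕ) : ZMod N)) := by
    intro j; congr 1; push_cast; ring
  have key2 : ∀ j : ℕ, f (2 * ((j : ℕ) : ZMod N) + 1) = f (((2 * j + 1 : ℕ) : ZMod N)) := by
    intro j; congr 1; push_cast; ring
  have h1 : ∑ k : ZMod N, f (2 * k) = ∑ j ∈ Finset.range N, f (((2 * j : ℕ) : ZMod N)) := by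
    rw [sum_zmod (fun k => f (2 * k))]
    exact Finset.sum_congr rfl fun j _ => key j
  have h2 : ∑ k : ZMod N, f (2 * k + 1)
      = ∑ j ∈ Finset.range N, f (((2 * j + 1 : ℕ) : ZMod N)) := by
    rw [sum_zmod (fun k => f (2 * k + 1))]
    exact Finset.sum_congr rfl fun j _ => key2 j
  rw [h1, h2, ← Finset.sum_add_distrib]
  rw [← range_pair (M := M) N (fun j => f ((j : ZMod N)))]
  rw [sum_zmod f, two_mul, Finset.sum_range_add, ← Finset.sum_add_distrib]
  rw [Finset.sum_add_distrib]
  congr 1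
  refine Finset.sum_congr rfl fun j hj => ?_
  have : ((N + j : ℕ) : ZMod N) = ((j : ℕ) : ZMod N) := by
    push_cast [ZMod.natCast_self]; ring
  rw [this]


lemma sum_shift {M : Type*} [AddCommMonoid M] (f : ZMod N → M) (c : ZMod N) :
    ∑ k : ZMod N, f (k + c) = ∑ k : ZMod N, f k :=
  Fintype.sum_equiv (Equiv.addRight c) _ _ (fun _ => rfl)

lemma sum_neg {M : Type*} [AddCommMonoid M] (f : ZMod N → M) :
    ∑ k : ZMod N, f (-k) = ∑ k : ZMod N, f k :=
  Fintype.sum_equiv (Equiv.neg (ZMod N)) _ _ (fun _ => rfl)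

lemma sign_mod (hN : Even N) (a : ℕ) : ((-1 : ℝ)) ^ (a % N) = (-1 : ℝ) ^ a := by
  conv_rhs => rw [← Nat.mod_add_div a N]
  rw [pow_add, pow_mul, hN.neg_one_pow, one_pow, mul_one]

lemma sign_add (hN : Even N) (x y : ZMod N) :
    (-1 : ℝ) ^ ((x + y).val) = (-1 : ℝ) ^ x.val * (-1 : ℝ) ^ y.val := by
  rw [ZMod.val_add, sign_mod hN, pow_add]

lemma sign_sq (x : ZMod N) : (-1 : ℝ) ^ x.val * (-1 : ℝ) ^ x.val = 1 := by
  rw [← pow_add]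
  exact Even.neg_one_pow ⟨x.val, rfl⟩

lemma sign_ne_zero (x : ZMod N) : (-1 : ℝ) ^ x.val ≠ 0 := by
  intro h
  have := sign_sq (N := N) x
  rw [h] at this
  norm_num at this

lemma sign_neg (hN : Even N) (x : ZMod N) :
    (-1 : ℝ) ^ ((-x : ZMod N).val) = (-1 : ℝ) ^ x.val := by
  have h1 : (-1 : ℝ) ^ x.val * (-1 : ℝ) ^ ((-x : ZMod N).val) = 1 := by
    rw [← sign_add hN, add_neg_cancel, ZMod.val_zero, pow_zero]
  have h2 := sign_sq (N := N) x
  exact mul_left_cancel₀ (sign_ne_zero x) (h1.trans h2.symm)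

lemma sign_even_rep (hN : Even N) {x : ZMod N} (hx : (-1 : ℝ) ^ x.val = 1) :
    ∃ c : ZMod N, x = 2 * c := by
  have hev : Even x.val := by
    by_contra hodd
    rw [Nat.not_even_iff_odd] at hodd
    rw [hodd.neg_one_pow] at hx
    norm_num at hx
  obtain ⟨t, ht⟩ := hev
  refine ⟨(t : ZMod N), ?_⟩
  have : x = ((x.val : ℕ) : ZMod N) := (ZMod.natCast_rightInverse x).symm
  rw [this, ht]
  push_cast
  ring


lemma two_pi_I_ne_zero : 2 * (Real.pi : ℂ) * Complex.I ≠ 0 :=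
  mul_ne_zero (mul_ne_zero two_ne_zero (Complex.ofReal_ne_zero.2 Real.pi_ne_zero))
    Complex.I_ne_zero

lemma char_sum (a : ℤ) :
    ∑ j : ZMod N, Complex.exp (2 * (Real.pi : ℂ) * Complex.I * (a : ℂ) * (j.val : ℂ) / (N : ℂ))
      = if (a : ZMod N) = 0 then (N : ℂ) else 0 := by
  have hN0 : (N : ℂ) ≠ 0 := Nat.cast_ne_zero.2 (NeZero.ne N)
  set z : ℂ := Complex.exp (2 * (Real.pi : ℂ) * Complex.I * (a : ℂ) / (N : ℂ)) with hz
  have hzj : ∀ j : ℕ,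
      Complex.exp (2 * (Real.pi : ℂ) * Complex.I * (a : ℂ) * (j : ℂ) / (N : ℂ)) = z ^ j := by
    intro j
    rw [hz, ← Complex.exp_nat_mul]
    congr 1
    field_simp
  have hsum : ∑ j : ZMod N,
      Complex.exp (2 * (Real.pi : ℂ) * Complex.I * (a : ℂ) * (j.val : ℂ) / (N : ℂ))
      = ∑ j ∈ Finset.range N, z ^ j := by
    rw [sum_zmod (fun j : ZMod N =>
      Complex.exp (2 * (Real.pi : ℂ) * Complex.I * (a : ℂ) * (j.val : ℂ) / (N : ℂ)))]
    refine Finset.sum_congr rfl fun j hj => ?_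
    rw [ZMod.val_cast_of_lt (Finset.mem_range.1 hj)]
    exact hzj j
  have hzN : z ^ N = 1 := by
    rw [← hzj N]
    have he : 2 * (Real.pi : ℂ) * Complex.I * (a : ℂ) * (N : ℂ) / (N : ℂ)
        = (a : ℂ) * (2 * (Real.pi : ℂ) * Complex.I) := by
      field_simp
    rw [he]
    exact Complex.exp_int_mul_two_pi_mul_I a
  have hz1 : z = 1 ↔ (a : ZMod N) = 0 := by
    rw [ZMod.intCast_zmod_eq_zero_iff_dvd]
    constructor
    · intro h
      rw [hz, Complex.exp_eq_one_iff] at h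
      obtain ⟨n, hn⟩ := h
      refine ⟨n, ?_⟩
      have key : (2 * (Real.pi : ℂ) * Complex.I) * (a : ℂ)
          = (2 * (Real.pi : ℂ) * Complex.I) * ((N : ℂ) * (n : ℂ)) := by
        field_simp at hn
        linear_combination (2 * (Real.pi : ℂ) * Complex.I) * hn
      have : (a : ℂ) = (N : ℂ) * (n : ℂ) := mul_left_cancel₀ two_pi_I_ne_zero key
      exact_mod_cast this
    · rintro ⟨n, hn⟩
      rw [hz, hn]
      have he : 2 * (Real.pi : ℂ) * Complex.I * (((N : ℤ) * n : ℤ) : ℂ) / (N : ℂ)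
          = (n : ℂ) * (2 * (Real.pi : ℂ) * Complex.I) := by
        push_cast
        field_simp
      rw [he]
      exact Complex.exp_int_mul_two_pi_mul_I n
  rw [hsum]
  by_cases hcase : (a : ZMod N) = 0
  · rw [if_pos hcase]
    have : z = 1 := hz1.2 hcase
    simp [this]
  · rw [if_neg hcase]
    have hzne : z ≠ 1 := fun h => hcase (hz1.1 h)
    rw [geom_sum_eq hzne, hzN]
    simp


lemma spectral (hN : Even N) (g : ZMod N → ℝ) (gHat : ℝ → ℂ)
    (hgHat : ∀ ω : ℝ, gHat ω
      = ∑ n : ZMod N, (g n : ℂ) * Complex.exp (-Complex.I * (n.val : ℂ) * (ω : ℂ)))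
    (hcmf : ∀ ω : ℝ,
      ‖gHat ω‖ ^ 2 + ‖gHat (ω + Real.pi)‖ ^ 2 = 2)
    (σ : ZMod N) (hσ : (-1 : ℝ) ^ σ.val = 1) :
    ∑ v : ZMod N, g v * g (v + σ) = if σ = 0 then 1 else 0 := by
  classical
  have hN0 : (N : ℂ) ≠ 0 := Nat.cast_ne_zero.2 (NeZero.ne N)
  have hexpm : Complex.exp (-((Real.pi : ℂ) * Complex.I)) = -1 := by
    rw [Complex.exp_neg, Complex.exp_pi_mul_I]
    norm_num
  -- complex form of the CMF condition
  have hprod : ∀ ω : ℝ, gHat ω * (starRingEnd ℂ) (gHat ω)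
      + gHat (ω + Real.pi) * (starRingEnd ℂ) (gHat (ω + Real.pi)) = 2 := by
    intro ω
    rw [Complex.mul_conj, Complex.mul_conj, ← Complex.ofReal_add,
      ← Complex.sq_norm, ← Complex.sq_norm, hcmf ω]
    norm_num
  -- conjugate of gHat
  have hconj : ∀ ω : ℝ, (starRingEnd ℂ) (gHat ω)
      = ∑ w : ZMod N, (g w : ℂ) * Complex.exp (Complex.I * (w.val : ℂ) * (ω : ℂ)) := by
    intro ω
    rw [hgHat ω, map_sum]
    refine Finset.sum_congr rfl fun w _ => ?_
    rw [map_mul, Complex.conj_ofReal, ← Complex.exp_conj]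
    congr 1
    simp only [map_mul, map_neg, Complex.conj_I, Complex.conj_ofReal, map_natCast]
    ring
  -- the j-th discrete equation
  have hEq : ∀ j : ZMod N,
      ∑ v : ZMod N, ∑ w : ZMod N, ((g v * g w : ℝ) : ℂ)
          * (1 + (-1 : ℂ) ^ v.val * (-1 : ℂ) ^ w.val)
          * Complex.exp (2 * (Real.pi : ℂ) * Complex.I
              * (((w.val : ℤ) - (v.val : ℤ) : ℤ) : ℂ) * (j.val : ℂ) / (N : ℂ)) = 2 := by
    intro j
    set ω : ℝ := 2 * Real.pi * (j.val : ℝ) / N with hw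
    have hωC : ((ω : ℝ) : ℂ) = 2 * (Real.pi : ℂ) * (j.val : ℂ) / (N : ℂ) := by
      rw [hw]; push_cast; ring
    have h0 := hprod ω
    rw [hconj ω, hconj (ω + Real.pi), hgHat ω, hgHat (ω + Real.pi),
      Finset.sum_mul_sum, Finset.sum_mul_sum, ← Finset.sum_add_distrib] at h0
    refine Eq.trans ?_ h0
    refine Finset.sum_congr rfl fun v _ => ?_
    rw [← Finset.sum_add_distrib]
    refine Finset.sum_congr rfl fun w _ => ?_
    -- term by term identity
    have e1 : ((ω + Real.pi : ℝ) : ℂ) = (ω : ℂ) + (Real.pi : ℂ) := by push_cast; ring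
    rw [e1]
    have e2 : -Complex.I * (v.val : ℂ) * ((ω : ℂ) + (Real.pi : ℂ))
        = -Complex.I * (v.val : ℂ) * (ω : ℂ) + (v.val : ℂ) * -((Real.pi : ℂ) * Complex.I) := by
      ring
    have e3 : Complex.I * (w.val : ℂ) * ((ω : ℂ) + (Real.pi : ℂ))
        = Complex.I * (w.val : ℂ) * (ω : ℂ) + (w.val : ℂ) * ((Real.pi : ℂ) * Complex.I) := by
      ring
    rw [e2, e3, Complex.exp_add, Complex.exp_add, Complex.exp_nat_mul, Complex.exp_nat_mul,
      hexpm, Complex.exp_pi_mul_I]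
    have e4 : Complex.exp (-Complex.I * (v.val : ℂ) * (ω : ℂ))
          * Complex.exp (Complex.I * (w.val : ℂ) * (ω : ℂ))
        = Complex.exp (2 * (Real.pi : ℂ) * Complex.I
            * (((w.val : ℤ) - (v.val : ℤ) : ℤ) : ℂ) * (j.val : ℂ) / (N : ℂ)) := by
      rw [← Complex.exp_add]
      congr 1
      rw [hωC]
      push_cast
      field_simp
      ring
    push_cast at e4 ⊢
    rw [← e4]
    ring
  set coef : ZMod N → ZMod N → ℂ := fun v w => ((g v * g w : ℝ) : ℂ)
      * (1 + (-1 : ℂ) ^ v.val * (-1 : ℂ) ^ w.val) with hcoef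
  set χ : ZMod N → ℂ := fun j => Complex.exp (2 * (Real.pi : ℂ) * Complex.I
      * ((-(σ.val : ℤ) : ℤ) : ℂ) * (j.val : ℂ) / (N : ℂ)) with hχ
  have hv0 : ∀ x : ZMod N, ((x.val : ℤ) : ZMod N) = x := by
    intro x
    rw [Int.cast_natCast]
    exact ZMod.natCast_rightInverse x
  have hchar0 : ∑ j : ZMod N, χ j = if σ = 0 then (N : ℂ) else 0 := by
    have hcond0 : ((-(σ.val : ℤ) : ℤ) : ZMod N) = 0 ↔ σ = 0 := by
      rw [Int.cast_neg, hv0, neg_eq_zero]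
    simp only [hχ]
    rw [char_sum (-(σ.val : ℤ)), if_congr hcond0 rfl rfl]
  have hsum1 : ∑ j : ZMod N, (∑ v : ZMod N, ∑ w : ZMod N, coef v w
        * Complex.exp (2 * (Real.pi : ℂ) * Complex.I
            * (((w.val : ℤ) - (v.val : ℤ) : ℤ) : ℂ) * (j.val : ℂ) / (N : ℂ))) * χ j
      = 2 * (if σ = 0 then (N : ℂ) else 0) := by
    rw [← hchar0, Finset.mul_sum]
    refine Finset.sum_congr rfl fun j _ => ?_
    rw [hEq j]
  have hsum2 : ∑ j : ZMod N, (∑ v : ZMod N, ∑ w : ZMod N, coef v w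
        * Complex.exp (2 * (Real.pi : ℂ) * Complex.I
            * (((w.val : ℤ) - (v.val : ℤ) : ℤ) : ℂ) * (j.val : ℂ) / (N : ℂ))) * χ j
      = (∑ v : ZMod N, coef v (v + σ)) * (N : ℂ) := by
    simp_rw [Finset.sum_mul]
    rw [Finset.sum_comm]
    refine Finset.sum_congr rfl fun v _ => ?_
    rw [Finset.sum_comm]
    have hterm : ∀ w : ZMod N, (∑ j : ZMod N, coef v w
          * Complex.exp (2 * (Real.pi : ℂ) * Complex.I
              * (((w.val : ℤ) - (v.val : ℤ) : ℤ) : ℂ) * (j.val : ℂ) / (N : ℂ)) * χ j)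
        = coef v w * (if w = v + σ then (N : ℂ) else 0) := by
      intro w
      have hcomb : ∀ j : ZMod N, coef v w
            * Complex.exp (2 * (Real.pi : ℂ) * Complex.I
                * (((w.val : ℤ) - (v.val : ℤ) : ℤ) : ℂ) * (j.val : ℂ) / (N : ℂ)) * χ j
          = coef v w * Complex.exp (2 * (Real.pi : ℂ) * Complex.I
              * ((((w.val : ℤ) - (v.val : ℤ) - (σ.val : ℤ)) : ℤ) : ℂ) * (j.val : ℂ) / (N : ℂ)) := by
        intro j
        simp only [hχ]
        rw [mul_assoc, ← Complex.exp_add]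
        congr 2
        push_cast
        ring
      rw [Finset.sum_congr rfl fun j _ => hcomb j, ← Finset.mul_sum,
        char_sum ((w.val : ℤ) - (v.val : ℤ) - (σ.val : ℤ))]
      congr 1
      have hcond : ((((w.val : ℤ) - (v.val : ℤ) - (σ.val : ℤ)) : ℤ) : ZMod N) = 0 ↔ w = v + σ := by
        push_cast
        simp only [ZMod.natCast_val, ZMod.cast_id]
        rw [sub_sub, sub_eq_zero]
      exact if_congr hcond rfl rfl
    rw [Finset.sum_congr rfl fun w _ => hterm w]
    simp only [mul_ite, mul_zero, Finset.sum_ite_eq', Finset.mem_univ, if_true]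
  have hmain : (∑ v : ZMod N, coef v (v + σ)) * (N : ℂ)
      = 2 * (if σ = 0 then (N : ℂ) else 0) := hsum2.symm.trans hsum1
  have hcoefv : ∀ v : ZMod N, coef v (v + σ) = 2 * ((g v * g (v + σ) : ℝ) : ℂ) := by
    intro v
    have hr : (-1 : ℝ) ^ v.val * (-1 : ℝ) ^ ((v + σ).val) = 1 := by
      rw [sign_add hN v σ, hσ, mul_one, sign_sq]
    have hsignC : (-1 : ℂ) ^ v.val * (-1 : ℂ) ^ ((v + σ).val) = 1 := by
      have : (((-1 : ℝ) ^ v.val * (-1 : ℝ) ^ ((v + σ).val) : ℝ) : ℂ)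
          = (-1 : ℂ) ^ v.val * (-1 : ℂ) ^ ((v + σ).val) := by push_cast; ring
      rw [← this, hr]
      norm_num
    simp only [hcoef]
    rw [hsignC]
    ring
  have h1 : (∑ v : ZMod N, coef v (v + σ))
      = 2 * ∑ v : ZMod N, ((g v * g (v + σ) : ℝ) : ℂ) := by
    rw [Finset.mul_sum]
    exact Finset.sum_congr rfl fun v _ => hcoefv v
  rw [h1] at hmain
  have hfin : (∑ v : ZMod N, ((g v * g (v + σ) : ℝ) : ℂ)) = (if σ = 0 then 1 else 0) := by
    by_cases h : σ = 0
    · rw [if_pos h] at hmain ⊢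
      have h2 : (2 : ℂ) * ∑ v : ZMod N, ((g v * g (v + σ) : ℝ) : ℂ) = 2 :=
        mul_right_cancel₀ hN0 hmain
      have h3 : (2 : ℂ) * ∑ v : ZMod N, ((g v * g (v + σ) : ℝ) : ℂ) = 2 * 1 := by
        rw [h2, mul_one]
      exact mul_left_cancel₀ two_ne_zero h3
    · rw [if_neg h] at hmain ⊢
      rw [mul_zero] at hmain
      have h3 := (mul_eq_zero.1 hmain).resolve_right hN0
      exact (mul_eq_zero.1 h3).resolve_left two_ne_zero
  have hR : ((∑ v : ZMod N, g v * g (v + σ) : ℝ) : ℂ)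
      = (((if σ = 0 then 1 else 0) : ℝ) : ℂ) := by
    rw [Complex.ofReal_sum, hfin]
    split_ifs <;> norm_num
  exact_mod_cast hR

lemma kernel (hN : Even N) (g gb : ZMod N → ℝ)
    (hgb : ∀ n : ZMod N, gb n = (-1 : ℝ) ^ ((1 - n : ZMod N).val) * g (1 - n))
    (hC : ∀ σ : ZMod N, (-1 : ℝ) ^ σ.val = 1 →
      ∑ v : ZMod N, g v * g (v + σ) = if σ = 0 then 1 else 0)
    (m m' : ZMod N) :
    (∑ n : Fin (N / 2),
        g (((2 * n.val : ℕ) : ZMod N) - m) * g (((2 * n.val : ℕ) : ZMod N) - m'))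
      + (∑ n : Fin (N / 2),
        gb (((2 * n.val : ℕ) : ZMod N) - m) * gb (((2 * n.val : ℕ) : ZMod N) - m'))
      = if m = m' then 1 else 0 := by
  classical
  have hN2 : Fact (1 < N) := ⟨by
    rcases hN with ⟨r, hr⟩
    have := NeZero.ne N
    omega⟩
  have hval1 : ((1 : ZMod N)).val = 1 := ZMod.val_one N
  have hs1 : (-1 : ℝ) ^ ((1 : ZMod N)).val = -1 := by rw [hval1, pow_one]
  have gswap : ∀ {x x' y y' : ZMod N}, x = y' → y = x' → g x * g y = g x' * g y' := by
    intro x x' y y' h1 h2; subst h1; subst h2; ring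
  have gcong : ∀ {x x' y y' : ZMod N}, x = x' → y = y' → g x * g y = g x' * g y' := by
    intro x x' y y' h1 h2; subst h1; subst h2; rfl
  set τ : ZMod N := m - m' with hτdef
  set S1 : ℝ := ∑ n : Fin (N / 2),
      g (((2 * n.val : ℕ) : ZMod N) - m) * g (((2 * n.val : ℕ) : ZMod N) - m') with hS1def
  set S2 : ℝ := ∑ n : Fin (N / 2),
      gb (((2 * n.val : ℕ) : ZMod N) - m) * gb (((2 * n.val : ℕ) : ZMod N) - m') with hS2def
  have hd1 : (∑ k : ZMod N, g (2 * k - m) * g (2 * k - m')) = S1 + S1 :=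
    double_lemma hN (fun x => g (x - m) * g (x - m'))
  have hd2 : (∑ k : ZMod N, gb (2 * k - m) * gb (2 * k - m')) = S2 + S2 :=
    double_lemma hN (fun x => gb (x - m) * gb (x - m'))
  have hsgn : ∀ a b : ZMod N, (-1 : ℝ) ^ (((1 + a) - 2 * b : ZMod N)).val
      = (-1 : ℝ) ^ ((1 : ZMod N)).val * (-1 : ℝ) ^ a.val := by
    intro a b
    have e : (1 + a) - 2 * b = ((1 + a) + (-b)) + (-b) := by ring
    rw [e, sign_add hN, sign_add hN, mul_assoc, sign_sq, mul_one, sign_add hN]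
  have hT2 : (∑ k : ZMod N, gb (2 * k - m) * gb (2 * k - m'))
      = ((-1 : ℝ) ^ m.val * (-1 : ℝ) ^ m'.val)
        * ∑ k : ZMod N, g ((1 + m) + 2 * k) * g ((1 + m') + 2 * k) := by
    have hterm : ∀ k : ZMod N, gb (2 * k - m) * gb (2 * k - m')
        = ((-1 : ℝ) ^ m.val * (-1 : ℝ) ^ m'.val)
          * (g ((1 + m) - 2 * k) * g ((1 + m') - 2 * k)) := by
      intro k
      rw [hgb (2 * k - m), hgb (2 * k - m')]
      have e1 : (1 : ZMod N) - (2 * k - m) = (1 + m) - 2 * k := by ring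
      have e2 : (1 : ZMod N) - (2 * k - m') = (1 + m') - 2 * k := by ring
      rw [e1, e2, hsgn m k, hsgn m' k]
      linear_combination (g ((1 + m) - 2 * k) * g ((1 + m') - 2 * k)
        * ((-1 : ℝ) ^ m.val * (-1 : ℝ) ^ m'.val)) * (sign_sq (N := N) 1)
    rw [Finset.sum_congr rfl fun k _ => hterm k, ← Finset.mul_sum]
    congr 1
    refine Fintype.sum_equiv (Equiv.neg (ZMod N)) _ _ fun k => ?_
    simp only [Equiv.neg_apply]
    exact gcong (by ring) (by ring)
  rcases Nat.even_or_odd (m.val + m'.val) with hpar | hpar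
  · -- even case
    have hP : (-1 : ℝ) ^ m.val * (-1 : ℝ) ^ m'.val = 1 := by
      rw [← pow_add]; exact hpar.neg_one_pow
    have hτ1 : (-1 : ℝ) ^ τ.val = 1 := by
      rw [hτdef, sub_eq_add_neg, sign_add hN, sign_neg hN, ← pow_add]
      exact hpar.neg_one_pow
    have hmm' : (-1 : ℝ) ^ ((m + m' : ZMod N)).val = 1 := by
      rw [sign_add hN, ← pow_add]; exact hpar.neg_one_pow
    obtain ⟨c, hc⟩ := sign_even_rep hN hmm'
    have hB : (∑ k : ZMod N, g ((1 + m) + 2 * k) * g ((1 + m') + 2 * k))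
        = ∑ k : ZMod N, g ((2 * k + 1) - m) * g ((2 * k + 1) - m') := by
      refine Fintype.sum_equiv (Equiv.addRight c) _ _ fun k => ?_
      simp only [Equiv.coe_addRight]
      exact gswap (by linear_combination hc) (by linear_combination hc)
    have hcov : (∑ k : ZMod N, g (2 * k - m) * g (2 * k - m'))
          + (∑ k : ZMod N, g ((2 * k + 1) - m) * g ((2 * k + 1) - m'))
        = (∑ v : ZMod N, g (v - m) * g (v - m'))
          + ∑ v : ZMod N, g (v - m) * g (v - m') :=
      cover_lemma hN (fun y => g (y - m) * g (y - m'))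
    have hcorr : (∑ v : ZMod N, g (v - m) * g (v - m')) = if m = m' then 1 else 0 := by
      have h1 : (∑ v : ZMod N, g (v - m) * g (v - m')) = ∑ v : ZMod N, g v * g (v + τ) := by
        refine Fintype.sum_equiv (Equiv.subRight m) _ _ fun v => ?_
        simp only [Equiv.subRight_apply]
        exact gcong rfl (by rw [hτdef]; ring)
      have h2 : (τ = 0) = (m = m') := by
        rw [hτdef]; exact propext sub_eq_zero
      rw [h1, hC τ hτ1]
      exact if_congr (iff_of_eq h2) rfl rfl
    have final : (S1 + S2) + (S1 + S2)
        = (if m = m' then 1 else 0) + (if m = m' then 1 else 0) := by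
      have e : (S1 + S2) + (S1 + S2) = (S1 + S1) + (S2 + S2) := by ring
      rw [e, ← hd1, ← hd2, hT2, hP, one_mul, hB, hcov, hcorr]
    linarith [final]
  · -- odd case
    have hP : (-1 : ℝ) ^ m.val * (-1 : ℝ) ^ m'.val = -1 := by
      rw [← pow_add]; exact hpar.neg_one_pow
    have hodd1 : (-1 : ℝ) ^ ((1 + m + m' : ZMod N)).val = 1 := by
      rw [sign_add hN, sign_add hN, hs1, mul_assoc, hP]
      norm_num
    obtain ⟨c, hc⟩ := sign_even_rep hN hodd1
    have hne : m ≠ m' := by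
      intro h
      rw [h, sign_sq] at hP
      norm_num at hP
    have hB : (∑ k : ZMod N, g ((1 + m) + 2 * k) * g ((1 + m') + 2 * k))
        = ∑ k : ZMod N, g (2 * k - m) * g (2 * k - m') := by
      refine Fintype.sum_equiv (Equiv.addRight c) _ _ fun k => ?_
      simp only [Equiv.coe_addRight]
      exact gswap (by linear_combination hc) (by linear_combination hc)
    have final : (S1 + S2) + (S1 + S2) = 0 := by
      have e : (S1 + S2) + (S1 + S2) = (S1 + S1) + (S2 + S2) := by ring
      rw [e, ← hd1, ← hd2, hT2, hB, hP]
      ring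
    rw [if_neg hne]
    linarith [final]

end CMFaux


/-- conjugate mirror filters generate an orthogonal matrix: if
`g ∈ ℓ²(ℤ/Nℤ)` (`N` even) satisfies `|gHat(ω)|² + |gHat(ω+π)|² = 2` for all `ω`, and
`ḡ(n) = (-1)^{1-n} g(1-n)`, then `φ ↦ (Gφ, Ḡφ)` with `Gφ(n) = (φ*g)(2n)` and
`Ḡφ(n) = (φ*ḡ)(2n)` (circular convolution) is orthogonal from `ℝ^N` to
`ℝ^{N/2} × ℝ^{N/2}`, i.e. it preserves inner products. -/
theorem conjugate_mirror_filters_orthogonal (N : ℕ) [NeZero N] (hN : Even N)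
    (g : ZMod N → ℝ)
    (gHat : ℝ → ℂ)
    (hgHat : ∀ ω : ℝ, gHat ω = ∑ n : ZMod N, (g n : ℂ) * Complex.exp (-Complex.I * (n.val : ℂ) * (ω : ℂ)))
    (hcmf : ∀ ω : ℝ, ‖gHat ω‖ ^ 2 + ‖gHat (ω + Real.pi)‖ ^ 2 = 2)
    (gb : ZMod N → ℝ)
    (hgb : ∀ n : ZMod N, gb n = (-1 : ℝ) ^ ((1 - n : ZMod N).val) * g (1 - n))
    (Gop Gbop : (ZMod N → ℝ) → Fin (N / 2) → ℝ)
    (hG : ∀ (φ : ZMod N → ℝ) (n : Fin (N / 2)),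
      Gop φ n = ∑ m : ZMod N, φ m * g (((2 * n.val : ℕ) : ZMod N) - m))
    (hGb : ∀ (φ : ZMod N → ℝ) (n : Fin (N / 2)),
      Gbop φ n = ∑ m : ZMod N, φ m * gb (((2 * n.val : ℕ) : ZMod N) - m)) :
    ∀ φ ψ : ZMod N → ℝ,
      (∑ n, Gop φ n * Gop ψ n) + (∑ n, Gbop φ n * Gbop ψ n) = ∑ m, φ m * ψ m := by
  intro φ ψ
  classical
  have hC : ∀ σ : ZMod N, (-1 : ℝ) ^ σ.val = 1 →
      ∑ v : ZMod N, g v * g (v + σ) = if σ = 0 then 1 else 0 :=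
    fun σ hσ => CMFaux.spectral hN g gHat hgHat hcmf σ hσ
  have hker := fun m m' => CMFaux.kernel hN g gb hgb hC m m'
  have h1 : (∑ n, Gop φ n * Gop ψ n)
      = ∑ m : ZMod N, ∑ m' : ZMod N, (φ m * ψ m')
          * ∑ n : Fin (N / 2),
              g (((2 * n.val : ℕ) : ZMod N) - m) * g (((2 * n.val : ℕ) : ZMod N) - m') := by
    have e1 : ∀ n : Fin (N / 2), Gop φ n * Gop ψ n
        = ∑ m : ZMod N, ∑ m' : ZMod N,
            (φ m * g (((2 * n.val : ℕ) : ZMod N) - m))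
              * (ψ m' * g (((2 * n.val : ℕ) : ZMod N) - m')) := by
      intro n
      rw [hG φ n, hG ψ n, Finset.sum_mul_sum]
    calc (∑ n, Gop φ n * Gop ψ n)
        = ∑ n : Fin (N / 2), ∑ m : ZMod N, ∑ m' : ZMod N,
            (φ m * g (((2 * n.val : ℕ) : ZMod N) - m))
              * (ψ m' * g (((2 * n.val : ℕ) : ZMod N) - m')) :=
          Finset.sum_congr rfl fun n _ => e1 n
      _ = ∑ m : ZMod N, ∑ n : Fin (N / 2), ∑ m' : ZMod N,
            (φ m * g (((2 * n.val : ℕ) : ZMod N) - m))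
              * (ψ m' * g (((2 * n.val : ℕ) : ZMod N) - m')) := Finset.sum_comm
      _ = ∑ m : ZMod N, ∑ m' : ZMod N, ∑ n : Fin (N / 2),
            (φ m * g (((2 * n.val : ℕ) : ZMod N) - m))
              * (ψ m' * g (((2 * n.val : ℕ) : ZMod N) - m')) :=
          Finset.sum_congr rfl fun m _ => Finset.sum_comm
      _ = ∑ m : ZMod N, ∑ m' : ZMod N, (φ m * ψ m')
          * ∑ n : Fin (N / 2),
              g (((2 * n.val : ℕ) : ZMod N) - m) * g (((2 * n.val : ℕ) : ZMod N) - m') := by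
          refine Finset.sum_congr rfl fun m _ => Finset.sum_congr rfl fun m' _ => ?_
          rw [Finset.mul_sum]
          exact Finset.sum_congr rfl fun n _ => by ring
  have h2 : (∑ n, Gbop φ n * Gbop ψ n)
      = ∑ m : ZMod N, ∑ m' : ZMod N, (φ m * ψ m')
          * ∑ n : Fin (N / 2),
              gb (((2 * n.val : ℕ) : ZMod N) - m) * gb (((2 * n.val : ℕ) : ZMod N) - m') := by
    have e1 : ∀ n : Fin (N / 2), Gbop φ n * Gbop ψ n
        = ∑ m : ZMod N, ∑ m' : ZMod N,
            (φ m * gb (((2 * n.val : ℕ) : ZMod N) - m))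
              * (ψ m' * gb (((2 * n.val : ℕ) : ZMod N) - m')) := by
      intro n
      rw [hGb φ n, hGb ψ n, Finset.sum_mul_sum]
    calc (∑ n, Gbop φ n * Gbop ψ n)
        = ∑ n : Fin (N / 2), ∑ m : ZMod N, ∑ m' : ZMod N,
            (φ m * gb (((2 * n.val : ℕ) : ZMod N) - m))
              * (ψ m' * gb (((2 * n.val : ℕ) : ZMod N) - m')) :=
          Finset.sum_congr rfl fun n _ => e1 n
      _ = ∑ m : ZMod N, ∑ n : Fin (N / 2), ∑ m' : ZMod N,
            (φ m * gb (((2 * n.val : ℕ) : ZMod N) - m))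
              * (ψ m' * gb (((2 * n.val : ℕ) : ZMod N) - m')) := Finset.sum_comm
      _ = ∑ m : ZMod N, ∑ m' : ZMod N, ∑ n : Fin (N / 2),
            (φ m * gb (((2 * n.val : ℕ) : ZMod N) - m))
              * (ψ m' * gb (((2 * n.val : ℕ) : ZMod N) - m')) :=
          Finset.sum_congr rfl fun m _ => Finset.sum_comm
      _ = ∑ m : ZMod N, ∑ m' : ZMod N, (φ m * ψ m')
          * ∑ n : Fin (N / 2),
              gb (((2 * n.val : ℕ) : ZMod N) - m) * gb (((2 * n.val : ℕ) : ZMod N) - m') := by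
          refine Finset.sum_congr rfl fun m _ => Finset.sum_congr rfl fun m' _ => ?_
          rw [Finset.mul_sum]
          exact Finset.sum_congr rfl fun n _ => by ring
  rw [h1, h2, ← Finset.sum_add_distrib]
  have h3 : ∀ m : ZMod N,
      (∑ m' : ZMod N, (φ m * ψ m')
          * ∑ n : Fin (N / 2),
              g (((2 * n.val : ℕ) : ZMod N) - m) * g (((2 * n.val : ℕ) : ZMod N) - m'))
        + (∑ m' : ZMod N, (φ m * ψ m')
          * ∑ n : Fin (N / 2),
              gb (((2 * n.val : ℕ) : ZMod N) - m) * gb (((2 * n.val : ℕ) : ZMod N) - m'))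
      = ∑ m' : ZMod N, (φ m * ψ m') * (if m = m' then 1 else 0) := by
    intro m
    rw [← Finset.sum_add_distrib]
    refine Finset.sum_congr rfl fun m' _ => ?_
    rw [← mul_add, hker m m']
  rw [Finset.sum_congr rfl fun m _ => h3 m]
  refine Finset.sum_congr rfl fun m _ => ?_
  simp [mul_ite, mul_one, mul_zero, Finset.sum_ite_eq]

end
end
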